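/- arXiv:2007.06864 — 2 statements merged into one kernel-verified Lean document; each statement's English description precedes it below -/
import Mathlib

section
/- First Korn inequality: let N ≥ 2 and let Ω ⊆ ℝ^N be an open set. Then for every continuously differentiable function u : ℝ^N → ℂ^N with compact support contained in Ω, one has ∫_Ω ‖∇u‖² ≤ 2 ∫_Ω ‖Eu‖², where Eu = ½(∇u + (∇u)ᵀ) is the symmetric gradient and ‖·‖ the Frobenius norm. -/
open MeasureTheory Metric

open Topology
open scoped Convolution Pointwise

section Swap

variable {E : Type*} [NormedAddCommGroup E] [NormedSpace ℝ E] [FiniteDimensional ℝ E]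
  [MeasurableSpace E] [BorelSpace E] {μ : Measure E} [μ.IsAddHaarMeasure]

omit [FiniteDimensional ℝ E] [MeasurableSpace E] [BorelSpace E] in
lemma aux_hasFDerivAt_fderiv_apply {f : E → ℂ} (hf : ContDiff ℝ 2 f) (w : E) (x : E) :
    HasFDerivAt (fun y => fderiv ℝ f y w)
      ((ContinuousLinearMap.apply ℝ ℂ w).comp (fderiv ℝ (fderiv ℝ f) x)) x := by
  have h1 : ContDiff ℝ 1 (fderiv ℝ f) := hf.fderiv_right (m := 1) le_rfl
  have h2 : HasFDerivAt (fderiv ℝ f) (fderiv ℝ (fderiv ℝ f) x) x :=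
    (h1.differentiable one_ne_zero x).hasFDerivAt
  exact (ContinuousLinearMap.apply ℝ ℂ w).hasFDerivAt.comp x h2

lemma swap_smooth {f g : E → ℂ} (hf : ContDiff ℝ 2 f) (hg : ContDiff ℝ 2 g)
    (hcf : HasCompactSupport f) (hcg : HasCompactSupport g) (v w : E) :
    ∫ x, fderiv ℝ f x v * fderiv ℝ g x w ∂μ
      = ∫ x, fderiv ℝ f x w * fderiv ℝ g x v ∂μ := by
  have hg1 : ContDiff ℝ 1 (fderiv ℝ g) := hg.fderiv_right (m := 1) le_rfl
  have hgw : ∀ z : E, Differentiable ℝ (fun y => fderiv ℝ g y z) :=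
    fun z y => (aux_hasFDerivAt_fderiv_apply hg z y).differentiableAt
  have hfd : Differentiable ℝ f := hf.differentiable two_ne_zero
  have hcg' : ∀ z : E, HasCompactSupport (fun y => fderiv ℝ g y z) := fun z =>
    (hcg.fderiv ℝ).comp_left (g := fun (L : E →L[ℝ] ℂ) => L z) rfl
  have hcf' : ∀ z : E, HasCompactSupport (fun y => fderiv ℝ f y z) := fun z =>
    (hcf.fderiv ℝ).comp_left (g := fun (L : E →L[ℝ] ℂ) => L z) rfl
  have contgz : ∀ z : E, Continuous (fun y => fderiv ℝ g y z) := fun z =>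
    (ContinuousLinearMap.apply ℝ ℂ z).continuous.comp hg1.continuous
  have contfz : ∀ z : E, Continuous (fun y => fderiv ℝ f y z) := fun z =>
    (ContinuousLinearMap.apply ℝ ℂ z).continuous.comp
      ((hf.fderiv_right (m := 1) le_rfl)).continuous
  have fder_eq : ∀ (z z' : E) (y : E),
      fderiv ℝ (fun y => fderiv ℝ g y z) y z' = fderiv ℝ (fderiv ℝ g) y z' z := by
    intro z z' y
    rw [(aux_hasFDerivAt_fderiv_apply hg z y).fderiv]
    rfl
  have symm : ∀ (y : E) (z z' : E),
      fderiv ℝ (fderiv ℝ g) y z z' = fderiv ℝ (fderiv ℝ g) y z' z := fun y z z' =>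
    second_derivative_symmetric (f := g) (f' := fderiv ℝ g)
      (fun y' => ((hg.differentiable two_ne_zero) y').hasFDerivAt)
      ((hg1.differentiable one_ne_zero y).hasFDerivAt) z z'
  have cont2 : ∀ z z' : E, Continuous (fun y => fderiv ℝ (fderiv ℝ g) y z' z) :=
    fun z z' => (ContinuousLinearMap.apply ℝ ℂ z).continuous.comp
      ((ContinuousLinearMap.apply ℝ (E →L[ℝ] ℂ) z').continuous.comp
        ((hg1.fderiv_right (m := 0) le_rfl).continuous))
  -- integration by parts, once for each direction
  have ibp : ∀ z z' : E,
      ∫ x, fderiv ℝ g x z * fderiv ℝ f x z' ∂μ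
        = - ∫ x, fderiv ℝ (fderiv ℝ g) x z' z * f x ∂μ := by
    intro z z'
    have h := integral_mul_fderiv_eq_neg_fderiv_mul_of_integrable
      (μ := μ) (f := fun y => fderiv ℝ g y z) (g := f) (v := z')
      ?_ ?_ ?_ (fun x _ => hgw z x) (fun x _ => hfd x)
    · rw [h]
      congr 1
      apply integral_congr_ae
      filter_upwards with y
      rw [fder_eq]
    · apply Continuous.integrable_of_hasCompactSupport
      · exact ((cont2 z z').congr (fun y => (fder_eq z z' y).symm)).mul
          (hf.continuous)
      · exact hcf.mul_left
    · exact ((contgz z).mul (contfz z')).integrable_of_hasCompactSupport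
        ((hcf' z').mul_left)
    · exact ((contgz z).mul hf.continuous).integrable_of_hasCompactSupport
        (hcf.mul_left)
  have e1 := ibp w v
  have e2 := ibp v w
  have comm1 : ∀ x, fderiv ℝ f x v * fderiv ℝ g x w = fderiv ℝ g x w * fderiv ℝ f x v :=
    fun x => mul_comm _ _
  calc ∫ x, fderiv ℝ f x v * fderiv ℝ g x w ∂μ
      = ∫ x, fderiv ℝ g x w * fderiv ℝ f x v ∂μ := by simp_rw [mul_comm]
    _ = - ∫ x, fderiv ℝ (fderiv ℝ g) x v w * f x ∂μ := e1
    _ = - ∫ x, fderiv ℝ (fderiv ℝ g) x w v * f x ∂μ := by simp_rw [fun x => symm x v w]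
    _ = ∫ x, fderiv ℝ g x v * fderiv ℝ f x w ∂μ := (ibp v w).symm
    _ = ∫ x, fderiv ℝ f x w * fderiv ℝ g x v ∂μ := by simp_rw [mul_comm]

end Swap

section C1

variable {N : ℕ}

local notation "E" => EuclideanSpace ℝ (Fin N)

open ContinuousLinearMap Filter

lemma conv_deriv {f : E → ℂ} (hf : ContDiff ℝ 1 f) (hcf : HasCompactSupport f)
    (φ : ContDiffBump (0 : E)) (x v : E) :
    fderiv ℝ (φ.normed volume ⋆[lsmul ℝ ℝ, volume] f) x v
      = (φ.normed volume ⋆[lsmul ℝ ℝ, volume] (fun y => fderiv ℝ f y v)) x := by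
  have hφloc : LocallyIntegrable (φ.normed volume) volume :=
    φ.continuous_normed.locallyIntegrable
  have h := hcf.hasFDerivAt_convolution_right (lsmul ℝ ℝ) hφloc hf x
  rw [h.fderiv]
  exact convolution_precompR_apply (lsmul ℝ ℝ) hφloc (hcf.fderiv ℝ)
    (hf.continuous_fderiv one_ne_zero) x v


lemma conv_limit {h k : E → ℂ} (hh : Continuous h) (hk : Continuous k)
    (hch : HasCompactSupport h) (hck : HasCompactSupport k)
    (φ : ℕ → ContDiffBump (0 : E)) (hout1 : ∀ n, (φ n).rOut ≤ 1)
    (hφtendsto : Filter.Tendsto (fun n => (φ n).rOut) Filter.atTop (𝓝 0)) :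
    Filter.Tendsto
      (fun n => ∫ x, ((φ n).normed volume ⋆[lsmul ℝ ℝ, volume] h) x
        * ((φ n).normed volume ⋆[lsmul ℝ ℝ, volume] k) x)
      Filter.atTop (𝓝 (∫ x, h x * k x)) := by
  obtain ⟨Ch, hCh⟩ := hch.exists_bound_of_continuous hh
  obtain ⟨Ck, hCk⟩ := hck.exists_bound_of_continuous hk
  have hCh0 : 0 ≤ Ch := le_trans (norm_nonneg (h 0)) (hCh 0)
  have hCk0 : 0 ≤ Ck := le_trans (norm_nonneg (k 0)) (hCk 0)
  -- uniform bound on the mollifications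
  have convbound : ∀ (m : E → ℂ) (Cm : ℝ), Continuous m → (∀ x, ‖m x‖ ≤ Cm) →
      ∀ (n : ℕ) (x : E), ‖((φ n).normed volume ⋆[lsmul ℝ ℝ, volume] m) x‖ ≤ 3 * Cm := by
    intro m Cm hm hCm n x
    have hball : ∀ y ∈ ball x (φ n).rOut, dist (m y) (m x) ≤ 2 * Cm := by
      intro y _
      calc dist (m y) (m x) ≤ ‖m y‖ + ‖m x‖ := dist_le_norm_add_norm _ _
        _ ≤ Cm + Cm := add_le_add (hCm y) (hCm x)
        _ = 2 * Cm := by ring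
    have hd := (φ n).dist_normed_convolution_le (μ := volume)
      hm.aestronglyMeasurable hball
    calc ‖((φ n).normed volume ⋆[lsmul ℝ ℝ, volume] m) x‖
        ≤ ‖m x‖ + dist (((φ n).normed volume ⋆[lsmul ℝ ℝ, volume] m) x) (m x) := by
          rw [dist_eq_norm]
          exact norm_le_norm_add_norm_sub' _ _
      _ ≤ Cm + 2 * Cm := add_le_add (hCm x) hd
      _ = 3 * Cm := by ring
  -- fixed compact set containing all supports
  set K : Set E := closedBall (0 : E) 1 + (tsupport h ∪ tsupport k) with hK
  have hKcomp : IsCompact K := (isCompact_closedBall _ _).add (hch.union hck)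
  have hKmeas : MeasurableSet K := hKcomp.isClosed.measurableSet
  have hsupp : ∀ (m : E → ℂ), tsupport m ⊆ tsupport h ∪ tsupport k → ∀ (n : ℕ) (x : E),
      x ∉ K → ((φ n).normed volume ⋆[lsmul ℝ ℝ, volume] m) x = 0 := by
    intro m hm n x hx
    by_contra h0
    apply hx
    have hx' : x ∈ Function.support ((φ n).normed volume ⋆[lsmul ℝ ℝ, volume] m) := h0
    have h1 : Function.support ((φ n).normed volume) ⊆ closedBall (0 : E) 1 := by
      rw [(φ n).support_normed_eq]
      exact ball_subset_closedBall.trans (closedBall_subset_closedBall (hout1 n))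
    have h2 : Function.support m ⊆ tsupport h ∪ tsupport k :=
      (subset_tsupport m).trans hm
    exact Set.add_subset_add h1 h2 (support_convolution_subset (lsmul ℝ ℝ) hx')
  -- dominated convergence
  apply tendsto_integral_of_dominated_convergence
    (K.indicator (fun _ => (3 * Ch) * (3 * Ck)))
  · intro n
    have cF : Continuous ((φ n).normed volume ⋆[lsmul ℝ ℝ, volume] h) :=
      ((φ n).hasCompactSupport_normed).continuous_convolution_left _
        (φ n).continuous_normed hh.locallyIntegrable
    have cG : Continuous ((φ n).normed volume ⋆[lsmul ℝ ℝ, volume] k) :=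
      ((φ n).hasCompactSupport_normed).continuous_convolution_left _
        (φ n).continuous_normed hk.locallyIntegrable
    exact (cF.mul cG).aestronglyMeasurable
  · rw [integrable_indicator_iff hKmeas]
    exact integrableOn_const hKcomp.measure_lt_top.ne
  · intro n
    filter_upwards with x
    by_cases hx : x ∈ K
    · rw [Set.indicator_of_mem hx]
      rw [norm_mul]
      exact mul_le_mul (convbound h Ch hh hCh n x) (convbound k Ck hk hCk n x)
        (norm_nonneg _) (by positivity)
    · rw [Set.indicator_of_notMem hx,
        hsupp h Set.subset_union_left n x hx, zero_mul, norm_zero]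
  · filter_upwards with x
    exact (ContDiffBump.convolution_tendsto_right_of_continuous (φ := φ)
        hφtendsto hh x).mul
      (ContDiffBump.convolution_tendsto_right_of_continuous (φ := φ) hφtendsto hk x)

lemma swap_c1 {f g : E → ℂ} (hf : ContDiff ℝ 1 f) (hg : ContDiff ℝ 1 g)
    (hcf : HasCompactSupport f) (hcg : HasCompactSupport g) (v w : E) :
    ∫ x, fderiv ℝ f x v * fderiv ℝ g x w
      = ∫ x, fderiv ℝ f x w * fderiv ℝ g x v := by
  classical
  -- bump functions
  set φ : ℕ → ContDiffBump (0 : E) := fun n =>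
    ⟨((n : ℝ) + 2)⁻¹, 2 * ((n : ℝ) + 2)⁻¹, by positivity, by
      nlinarith [inv_pos.2 (show (0:ℝ) < (n:ℝ) + 2 by positivity)]⟩ with hφdef
  have hφout : ∀ n, (φ n).rOut = 2 * ((n : ℝ) + 2)⁻¹ := fun n => rfl
  have hout1 : ∀ n, (φ n).rOut ≤ 1 := by
    intro n
    rw [hφout]
    rw [mul_inv_le_iff₀ (by positivity)]
    nlinarith [Nat.cast_nonneg (α := ℝ) n]
  have hφtendsto : Tendsto (fun n => (φ n).rOut) atTop (𝓝 0) := by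
    have heq : (fun n : ℕ => (φ n).rOut) = fun n : ℕ => 2 * ((n:ℝ)+2)⁻¹ := rfl
    rw [heq]
    have h0 : Tendsto (fun n : ℕ => ((n : ℝ) + 2)⁻¹) atTop (𝓝 0) :=
      tendsto_inv_atTop_zero.comp
        (tendsto_atTop_add_const_right _ 2 tendsto_natCast_atTop_atTop)
    simpa using h0.const_mul 2
  -- the mollifications
  set F : ℕ → E → ℂ := fun n => (φ n).normed volume ⋆[lsmul ℝ ℝ, volume] f with hF
  set G : ℕ → E → ℂ := fun n => (φ n).normed volume ⋆[lsmul ℝ ℝ, volume] g with hG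
  have hFsm : ∀ n, ContDiff ℝ 2 (F n) := fun n =>
    (φ n).hasCompactSupport_normed.contDiff_convolution_left _
      ((φ n).contDiff_normed) (hf.continuous.locallyIntegrable)
  have hGsm : ∀ n, ContDiff ℝ 2 (G n) := fun n =>
    (φ n).hasCompactSupport_normed.contDiff_convolution_left _
      ((φ n).contDiff_normed) (hg.continuous.locallyIntegrable)
  have hFc : ∀ n, HasCompactSupport (F n) := fun n =>
    ((φ n).hasCompactSupport_normed).convolution _ hcf
  have hGc : ∀ n, HasCompactSupport (G n) := fun n =>
    ((φ n).hasCompactSupport_normed).convolution _ hcg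
  -- identity for mollified functions
  have hid : ∀ n,
      ∫ x, ((φ n).normed volume ⋆[lsmul ℝ ℝ, volume] (fun y => fderiv ℝ f y v)) x
            * ((φ n).normed volume ⋆[lsmul ℝ ℝ, volume] (fun y => fderiv ℝ g y w)) x
        = ∫ x, ((φ n).normed volume ⋆[lsmul ℝ ℝ, volume] (fun y => fderiv ℝ f y w)) x
            * ((φ n).normed volume ⋆[lsmul ℝ ℝ, volume] (fun y => fderiv ℝ g y v)) x := by
    intro n
    have h1 := swap_smooth (μ := (volume : Measure E)) (hFsm n) (hGsm n)
      (hFc n) (hGc n) v w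
    simp only [hF, hG] at h1
    simp_rw [conv_deriv hf hcf (φ n), conv_deriv hg hcg (φ n)] at h1
    exact h1
  have contf : ∀ z : E, Continuous (fun y => fderiv ℝ f y z) := fun z =>
    (ContinuousLinearMap.apply ℝ ℂ z).continuous.comp (hf.continuous_fderiv one_ne_zero)
  have contg : ∀ z : E, Continuous (fun y => fderiv ℝ g y z) := fun z =>
    (ContinuousLinearMap.apply ℝ ℂ z).continuous.comp (hg.continuous_fderiv one_ne_zero)
  have hcf' : ∀ z : E, HasCompactSupport (fun y => fderiv ℝ f y z) := fun z =>
    (hcf.fderiv ℝ).comp_left (g := fun (L : E →L[ℝ] ℂ) => L z) rfl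
  have hcg' : ∀ z : E, HasCompactSupport (fun y => fderiv ℝ g y z) := fun z =>
    (hcg.fderiv ℝ).comp_left (g := fun (L : E →L[ℝ] ℂ) => L z) rfl
  have L1 := conv_limit (contf v) (contg w) (hcf' v) (hcg' w) φ hout1 hφtendsto
  have L2 := conv_limit (contf w) (contg v) (hcf' w) (hcg' v) φ hout1 hφtendsto
  exact tendsto_nhds_unique (L1.congr hid) L2

end C1

lemma hcs_finsetSum {α ι : Type*} [TopologicalSpace α] (s : Finset ι) (g : ι → α → ℂ)
    (h : ∀ i ∈ s, HasCompactSupport (g i)) :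
    HasCompactSupport (fun x => ∑ i ∈ s, g i x) := by
  classical
  induction s using Finset.cons_induction with
  | empty => simp only [Finset.sum_empty]; exact HasCompactSupport.zero
  | cons a s ha ih =>
    simp_rw [Finset.sum_cons]
    exact (h a (Finset.mem_cons_self a s)).add
      (ih (fun i hi => h i (Finset.mem_cons_of_mem hi)))

/-- Partial derivative `∂f/∂x_j` of a scalar complex-valued function on `ℝ^N`. -/
noncomputable def pdc {N : ℕ} (f : EuclideanSpace ℝ (Fin N) → ℂ) (j : Fin N)
    (x : EuclideanSpace ℝ (Fin N)) : ℂ :=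
  fderiv ℝ f x (EuclideanSpace.single j 1)

/-- Entry `(i,j)` of the Jacobian matrix of a vector field `u : ℝ^N → ℂ^N`. -/
noncomputable def jac {N : ℕ} (u : EuclideanSpace ℝ (Fin N) → Fin N → ℂ)
    (x : EuclideanSpace ℝ (Fin N)) (i j : Fin N) : ℂ :=
  pdc (fun y => u y i) j x

/-- First Korn inequality: for every open `Ω ⊆ ℝ^N` and every `C¹` vector field
`u : ℝ^N → ℂ^N` with compact support contained in `Ω`,
`∫_Ω ‖∇u‖² ≤ 2 ∫_Ω ‖Eu‖²`, where `Eu = ½(∇u + (∇u)ᵀ)` and `‖·‖` is the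
Frobenius norm. -/
theorem first_korn_inequality (N : ℕ) (hN : 2 ≤ N)
    (Ω : Set (EuclideanSpace ℝ (Fin N))) (hΩopen : IsOpen Ω)
    (u : EuclideanSpace ℝ (Fin N) → Fin N → ℂ)
    (hu : ContDiff ℝ 1 u)
    (hsupp : HasCompactSupport u) (hsuppΩ : tsupport u ⊆ Ω) :
    (∫ x in Ω, ∑ i, ∑ j, ‖jac u x i j‖ ^ 2) ≤
      2 * ∫ x in Ω, ∑ i, ∑ j, ‖(jac u x i j + jac u x j i) / 2‖ ^ 2 := by
  classical
  set f : Fin N → EuclideanSpace ℝ (Fin N) → ℂ := fun i y => u y i with hfdef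
  have hfC : ∀ i, ContDiff ℝ 1 (f i) := fun i => (contDiff_pi.mp hu) i
  have hfc : ∀ i, HasCompactSupport (f i) := fun i =>
    hsupp.comp_left (g := fun v : Fin N → ℂ => v i) rfl
  set e : Fin N → EuclideanSpace ℝ (Fin N) := fun j => EuclideanSpace.single j 1 with hedef
  set a : Fin N → Fin N → EuclideanSpace ℝ (Fin N) → ℂ := fun i j x => fderiv ℝ (f i) x (e j) with hadef
  have hjac : ∀ x i j, jac u x i j = a i j x := fun x i j => rfl
  -- continuity and compact support of the entries
  have conta : ∀ i j, Continuous (a i j) := fun i j =>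
    (ContinuousLinearMap.apply ℝ ℂ (e j)).continuous.comp
      ((hfC i).continuous_fderiv one_ne_zero)
  have hca : ∀ i j, HasCompactSupport (a i j) := fun i j =>
    ((hfc i).fderiv ℝ).comp_left (g := fun (L : EuclideanSpace ℝ (Fin N) →L[ℝ] ℂ) => L (e j)) rfl
  -- entries vanish outside Ω
  have hzero : ∀ i j x, x ∉ Ω → a i j x = 0 := by
    intro i j x hx
    have h1 : tsupport (f i) ⊆ tsupport u :=
      closure_mono (fun y hy => by
        simp only [Function.mem_support] at hy ⊢
        exact fun h0 => hy (by rw [hfdef]; simp [h0]))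
    have h2 : x ∉ tsupport (f i) := fun h => hx (hsuppΩ (h1 h))
    have h3 : fderiv ℝ (f i) x = 0 := by
      by_contra h0
      exact h2 (support_fderiv_subset ℝ h0)
    simp [hadef, h3]
  -- basic integrability facts
  have hcprod : ∀ i j k l, HasCompactSupport
      (fun x => a i j x * (starRingEnd ℂ) (a k l x)) := by
    intro i j k l
    have h1 : HasCompactSupport (fun x => (starRingEnd ℂ) (a k l x)) :=
      (hca k l).comp_left (g := starRingEnd ℂ) (map_zero _)
    exact h1.mul_left
  have contprod : ∀ i j k l, Continuous (fun x => a i j x * (starRingEnd ℂ) (a k l x)) :=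
    fun i j k l => (conta i j).mul (Complex.continuous_conj.comp (conta k l))
  have Iprod : ∀ i j k l, Integrable (fun x => a i j x * (starRingEnd ℂ) (a k l x)) :=
    fun i j k l => (contprod i j k l).integrable_of_hasCompactSupport (hcprod i j k l)
  have Isq : ∀ i j, Integrable (fun x => ‖a i j x‖ ^ 2) := fun i j =>
    Continuous.integrable_of_hasCompactSupport (f := fun x => ‖a i j x‖ ^ 2) ((conta i j).norm.pow 2)
      ((hca i j).comp_left (g := fun z : ℂ => ‖z‖ ^ 2) (by simp))
  have Isqsum : Integrable (fun x => ∑ i, ∑ j, ‖a i j x‖ ^ 2) :=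
    MeasureTheory.integrable_finset_sum _ (fun i _ =>
      MeasureTheory.integrable_finset_sum _ (fun j _ => Isq i j))
  have Iresum : Integrable
      (fun x => ∑ i, ∑ j, (a i j x * (starRingEnd ℂ) (a j i x)).re) :=
    MeasureTheory.integrable_finset_sum _ (fun i _ =>
      MeasureTheory.integrable_finset_sum _ (fun j _ => by
        simpa using (Iprod i j j i).re))
  -- the swap identity
  have swap : ∀ i j, (∫ x, a i j x * (starRingEnd ℂ) (a j i x))
      = ∫ x, a i i x * (starRingEnd ℂ) (a j j x) := by
    intro i j
    set cf : EuclideanSpace ℝ (Fin N) → ℂ := fun y => (starRingEnd ℂ) (f j y) with hcf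
    have hcfC : ContDiff ℝ 1 cf := Complex.conjCLE.contDiff.comp (hfC j)
    have hcfc : HasCompactSupport cf :=
      (hfc j).comp_left (g := starRingEnd ℂ) (map_zero _)
    have hconjd : ∀ (x z : EuclideanSpace ℝ (Fin N)),
        fderiv ℝ cf x z = (starRingEnd ℂ) (fderiv ℝ (f j) x z) := by
      intro x z
      have hd : HasFDerivAt cf
          ((Complex.conjCLE.toContinuousLinearMap).comp (fderiv ℝ (f j) x)) x :=
        Complex.conjCLE.toContinuousLinearMap.hasFDerivAt.comp x
          (((hfC j).differentiable one_ne_zero) x).hasFDerivAt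
      rw [hd.fderiv]
      rfl
    have h := swap_c1 (hfC i) hcfC (hfc i) hcfc (e j) (e i)
    simp_rw [hconjd] at h
    exact h
  -- positivity of the cross term
  have key : 0 ≤ ∫ x, ∑ i, ∑ j, (a i j x * (starRingEnd ℂ) (a j i x)).re := by
    have hdcs : HasCompactSupport (fun x => ∑ i, a i i x) :=
      hcs_finsetSum _ _ (fun i _ => hca i i)
    have hdcont : Continuous (fun x => ∑ i, a i i x) :=
      continuous_finset_sum _ (fun i _ => conta i i)
    have Id : Integrable
        (fun x => (∑ i, a i i x) * (starRingEnd ℂ) (∑ j, a j j x)) :=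
      (hdcont.mul (Complex.continuous_conj.comp hdcont)).integrable_of_hasCompactSupport
        (((hdcs.comp_left (g := starRingEnd ℂ) (map_zero _))).mul_left)
    have step1 : (∫ x, ∑ i, ∑ j, (a i j x * (starRingEnd ℂ) (a j i x)).re)
        = ∑ i, ∑ j, (∫ x, a i j x * (starRingEnd ℂ) (a j i x)).re := by
      rw [MeasureTheory.integral_finset_sum _ (fun i _ =>
        MeasureTheory.integrable_finset_sum _ (fun j _ => by
          simpa using (Iprod i j j i).re))]
      refine Finset.sum_congr rfl fun i _ => ?_
      rw [MeasureTheory.integral_finset_sum _ (fun j _ => by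
        simpa using (Iprod i j j i).re)]
      refine Finset.sum_congr rfl fun j _ => ?_
      simpa using integral_re (Iprod i j j i)
    have step2 : ∑ i, ∑ j, (∫ x, a i j x * (starRingEnd ℂ) (a j i x)).re
        = (∫ x, (∑ i, a i i x) * (starRingEnd ℂ) (∑ j, a j j x)).re := by
      simp_rw [swap]
      have e1 : ∑ i, ∑ j, (∫ x, a i i x * (starRingEnd ℂ) (a j j x)).re
          = (∑ i, ∑ j, ∫ x, a i i x * (starRingEnd ℂ) (a j j x)).re := by
        simp [Complex.re_sum]
      rw [e1]
      congr 1
      calc ∑ i, ∑ j, ∫ x, a i i x * (starRingEnd ℂ) (a j j x)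
          = ∑ i, ∫ x, ∑ j, a i i x * (starRingEnd ℂ) (a j j x) :=
            Finset.sum_congr rfl fun i _ =>
              (MeasureTheory.integral_finset_sum _ (fun j _ => Iprod i i j j)).symm
        _ = ∫ x, ∑ i, ∑ j, a i i x * (starRingEnd ℂ) (a j j x) :=
            (MeasureTheory.integral_finset_sum _ (fun i _ =>
              MeasureTheory.integrable_finset_sum _ (fun j _ => Iprod i i j j))).symm
        _ = ∫ x, (∑ i, a i i x) * (starRingEnd ℂ) (∑ j, a j j x) := by
            congr 1
            funext x
            rw [map_sum, Finset.sum_mul_sum]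
    have step3 : 0 ≤ (∫ x, (∑ i, a i i x) * (starRingEnd ℂ) (∑ j, a j j x)).re := by
      have h := integral_re Id
      simp only [RCLike.re_to_complex] at h
      rw [← h]
      apply MeasureTheory.integral_nonneg
      intro x
      show 0 ≤ ((∑ i, a i i x) * (starRingEnd ℂ) (∑ j, a j j x)).re
      rw [Complex.mul_conj, Complex.ofReal_re]
      exact Complex.normSq_nonneg _
    rw [step1, step2]
    exact step3
  -- pointwise algebraic identity
  have pt : ∀ x, 2 * (∑ i, ∑ j, ‖(a i j x + a j i x) / 2‖ ^ 2)
      = (∑ i, ∑ j, ‖a i j x‖ ^ 2)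
        + ∑ i, ∑ j, (a i j x * (starRingEnd ℂ) (a j i x)).re := by
    intro x
    have hzw : ∀ z w : ℂ, 2 * ‖(z + w) / 2‖ ^ 2
        = (‖z‖ ^ 2 + ‖w‖ ^ 2) / 2 + (z * (starRingEnd ℂ) w).re := by
      intro z w
      have hn : ∀ v : ℂ, ‖v‖ ^ 2 = Complex.normSq v := fun v => by
        rw [Complex.sq_norm]
      rw [hn, hn, hn, map_div₀]
      rw [Complex.normSq_add]
      have h2 : Complex.normSq 2 = 4 := by
        simp [Complex.normSq]
        norm_num
      rw [h2]
      ring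
    rw [Finset.mul_sum]
    simp_rw [Finset.mul_sum, hzw]
    simp_rw [Finset.sum_add_distrib]
    congr 1
    have h1 : ∀ i j : Fin N, (‖a i j x‖ ^ 2 + ‖a j i x‖ ^ 2) / 2
        = ‖a i j x‖ ^ 2 / 2 + ‖a j i x‖ ^ 2 / 2 := fun i j => add_div _ _ _
    simp_rw [h1, Finset.sum_add_distrib]
    rw [show (∑ i : Fin N, ∑ j : Fin N, ‖a j i x‖ ^ 2 / 2)
        = ∑ i : Fin N, ∑ j : Fin N, ‖a i j x‖ ^ 2 / 2 from Finset.sum_comm]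
    rw [← Finset.sum_add_distrib]
    refine Finset.sum_congr rfl fun i _ => ?_
    rw [← Finset.sum_add_distrib]
    refine Finset.sum_congr rfl fun j _ => ?_
    rw [add_halves]
  -- reduce set integrals to full-space integrals and conclude
  simp_rw [hjac]
  rw [MeasureTheory.setIntegral_eq_integral_of_forall_compl_eq_zero
    (f := fun x => ∑ i, ∑ j, ‖a i j x‖ ^ 2) (fun x hx => by
      simp [hzero _ _ x hx]),
    MeasureTheory.setIntegral_eq_integral_of_forall_compl_eq_zero
    (f := fun x => ∑ i, ∑ j, ‖(a i j x + a j i x) / 2‖ ^ 2) (fun x hx => by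
      simp [hzero _ _ x hx])]
  rw [← MeasureTheory.integral_const_mul]
  simp_rw [pt]
  rw [MeasureTheory.integral_add Isqsum Iresum]
  exact le_add_of_nonneg_right key
end

section
/- Helmholtz decomposition of Navier solutions: let u : Ω → ℂ^N be a smooth solution of the Navier equation on an open set Ω ⊆ ℝ^N, and define u_p = −∇(div u)/ω_p² and u_s = (∇(div u) − Δu)/ω_s². Then u = u_p + u_s on Ω, u_p satisfies Δu_p + ω_p² u_p = 0 componentwise on Ω, and u_s satisfies Δu_s + ω_s² u_s = 0 componentwise on Ω. -/
open MeasureTheory Metric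

/-- Divergence of a vector field `u : ℝ^N → ℂ^N`. -/
noncomputable def divC {N : ℕ} (u : EuclideanSpace ℝ (Fin N) → Fin N → ℂ)
    (x : EuclideanSpace ℝ (Fin N)) : ℂ :=
  ∑ i, jac u x i i

/-- Laplacian of a scalar complex-valued function on `ℝ^N`. -/
noncomputable def lapC {N : ℕ} (f : EuclideanSpace ℝ (Fin N) → ℂ)
    (x : EuclideanSpace ℝ (Fin N)) : ℂ :=
  ∑ j, pdc (pdc f j) j x

/-- `u` solves the Navier equation `μ Δu + (λ+μ) ∇(div u) + ρω² u = 0` on `Ω`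
(componentwise). -/
def NavierOn (mu lam rho om : ℝ) {N : ℕ}
    (u : EuclideanSpace ℝ (Fin N) → Fin N → ℂ)
    (Ω : Set (EuclideanSpace ℝ (Fin N))) : Prop :=
  ∀ x ∈ Ω, ∀ i, (mu : ℂ) * lapC (fun y => u y i) x
    + ((lam + mu : ℝ) : ℂ) * pdc (divC u) i x
    + ((rho * om ^ 2 : ℝ) : ℂ) * u x i = 0

/-- Longitudinal part `u_p = −∇(div u)/ω_p²`, with `ω_p² = ρω²/(λ+2μ)`. -/
noncomputable def uLong (mu lam rho om : ℝ) {N : ℕ}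
    (u : EuclideanSpace ℝ (Fin N) → Fin N → ℂ)
    (x : EuclideanSpace ℝ (Fin N)) (i : Fin N) : ℂ :=
  -pdc (divC u) i x / ((rho * om ^ 2 / (lam + 2 * mu) : ℝ) : ℂ)

/-- Transversal part `u_s = (∇(div u) − Δu)/ω_s²`, with `ω_s² = ρω²/μ`. -/
noncomputable def uTrans (mu rho om : ℝ) {N : ℕ}
    (u : EuclideanSpace ℝ (Fin N) → Fin N → ℂ)
    (x : EuclideanSpace ℝ (Fin N)) (i : Fin N) : ℂ :=
  (pdc (divC u) i x - lapC (fun y => u y i) x) / ((rho * om ^ 2 / mu : ℝ) : ℂ)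

section Aux

variable {N : ℕ} {Ω : Set (EuclideanSpace ℝ (Fin N))}
  {f g h : EuclideanSpace ℝ (Fin N) → ℂ} {x : EuclideanSpace ℝ (Fin N)} {i j k : Fin N}

lemma aux_diffAt (hΩ : IsOpen Ω) (hf : ContDiffOn ℝ (⊤:ℕ∞) f Ω) (hx : x ∈ Ω) :
    DifferentiableAt ℝ f x :=
  (hf.contDiffAt (hΩ.mem_nhds hx)).differentiableAt (by simp)

lemma pdc_congr (hΩ : IsOpen Ω) (hfg : Set.EqOn f g Ω) (hx : x ∈ Ω) :
    pdc f j x = pdc g j x := by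
  unfold pdc
  rw [Filter.EventuallyEq.fderiv_eq (hfg.eventuallyEq_of_mem (hΩ.mem_nhds hx))]

lemma pdc_zero : pdc (fun _ => (0:ℂ)) j x = 0 := by
  simp [pdc]

lemma pdc_zero_fun : pdc (fun _ => (0:ℂ)) (N := N) j = fun _ => 0 := by
  funext y; exact pdc_zero

lemma contDiffOn_pdc (hΩ : IsOpen Ω) (hf : ContDiffOn ℝ (⊤:ℕ∞) f Ω) :
    ContDiffOn ℝ (⊤:ℕ∞) (pdc f j) Ω :=
  (hf.fderiv_of_isOpen (m := (⊤:ℕ∞)) hΩ (by simp)).clm_apply contDiffOn_const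

lemma pdc_comb3 (hΩ : IsOpen Ω) (hf : ContDiffOn ℝ (⊤:ℕ∞) f Ω)
    (hg : ContDiffOn ℝ (⊤:ℕ∞) g Ω) (hh : ContDiffOn ℝ (⊤:ℕ∞) h Ω)
    (hx : x ∈ Ω) (a b c : ℂ) :
    pdc (fun y => a * f y + b * g y + c * h y) j x
      = a * pdc f j x + b * pdc g j x + c * pdc h j x := by
  have df := (aux_diffAt hΩ hf hx).hasFDerivAt
  have dg := (aux_diffAt hΩ hg hx).hasFDerivAt
  have dh := (aux_diffAt hΩ hh hx).hasFDerivAt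
  have H : HasFDerivAt (fun y => a * f y + b * g y + c * h y)
      (a • fderiv ℝ f x + b • fderiv ℝ g x + c • fderiv ℝ h x) x := by
    exact ((df.const_smul a).add (dg.const_smul b)).add (dh.const_smul c)
  unfold pdc
  rw [H.fderiv]
  simp [smul_eq_mul]

lemma pdc_comb2 (hΩ : IsOpen Ω) (hf : ContDiffOn ℝ (⊤:ℕ∞) f Ω)
    (hg : ContDiffOn ℝ (⊤:ℕ∞) g Ω) (hx : x ∈ Ω) (a b : ℂ) :
    pdc (fun y => a * f y + b * g y) j x = a * pdc f j x + b * pdc g j x := by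
  have df := (aux_diffAt hΩ hf hx).hasFDerivAt
  have dg := (aux_diffAt hΩ hg hx).hasFDerivAt
  have H : HasFDerivAt (fun y => a * f y + b * g y)
      (a • fderiv ℝ f x + b • fderiv ℝ g x) x := by
    exact (df.const_smul a).add (dg.const_smul b)
  unfold pdc
  rw [H.fderiv]
  simp [smul_eq_mul]

lemma pdc_const_mul (hΩ : IsOpen Ω) (hf : ContDiffOn ℝ (⊤:ℕ∞) f Ω) (hx : x ∈ Ω) (a : ℂ) :
    pdc (fun y => a * f y) j x = a * pdc f j x := by
  have df := (aux_diffAt hΩ hf hx).hasFDerivAt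
  have H : HasFDerivAt (fun y => a * f y) (a • fderiv ℝ f x) x := by
    exact df.const_smul a
  unfold pdc
  rw [H.fderiv]
  simp [smul_eq_mul]

lemma pdc_sum {ι : Type*} (s : Finset ι) (F : ι → EuclideanSpace ℝ (Fin N) → ℂ)
    (hΩ : IsOpen Ω) (hF : ∀ i ∈ s, ContDiffOn ℝ (⊤:ℕ∞) (F i) Ω) (hx : x ∈ Ω) :
    pdc (fun y => ∑ i ∈ s, F i y) j x = ∑ i ∈ s, pdc (F i) j x := by
  have H : HasFDerivAt (fun y => ∑ i ∈ s, F i y) (∑ i ∈ s, fderiv ℝ (F i) x) x :=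
    HasFDerivAt.fun_sum (fun i hi => (aux_diffAt hΩ (hF i hi) hx).hasFDerivAt)
  unfold pdc
  rw [H.fderiv]
  simp

lemma pdc_swap (hΩ : IsOpen Ω) (hf : ContDiffOn ℝ (⊤:ℕ∞) f Ω) (hx : x ∈ Ω) :
    pdc (pdc f j) k x = pdc (pdc f k) j x := by
  have h1 : DifferentiableAt ℝ (fderiv ℝ f) x :=
    (((hf.fderiv_of_isOpen (m := (⊤:ℕ∞)) hΩ (by simp)).contDiffAt (hΩ.mem_nhds hx)).differentiableAt (by simp))
  have h2 : ∀ (v w : EuclideanSpace ℝ (Fin N)),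
      fderiv ℝ (fun y => fderiv ℝ f y v) x w = fderiv ℝ (fderiv ℝ f) x w v := by
    intro v w
    have := fderiv_clm_apply (c := fderiv ℝ f) (u := fun _ => v) h1 (differentiableAt_const v)
    rw [this]
    simp
  have hsym := second_derivative_symmetric_of_eventually (f := f) (f' := fderiv ℝ f)
    (f'' := fderiv ℝ (fderiv ℝ f) x) (x := x)
    (by
      filter_upwards [hΩ.mem_nhds hx] with y hy
      exact (aux_diffAt hΩ hf hy).hasFDerivAt)
    h1.hasFDerivAt
  show fderiv ℝ (fun y => fderiv ℝ f y (EuclideanSpace.single j 1)) x (EuclideanSpace.single k 1)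
      = fderiv ℝ (fun y => fderiv ℝ f y (EuclideanSpace.single k 1)) x (EuclideanSpace.single j 1)
  rw [h2, h2, hsym]

lemma contDiffOn_lapC (hΩ : IsOpen Ω) (hf : ContDiffOn ℝ (⊤:ℕ∞) f Ω) :
    ContDiffOn ℝ (⊤:ℕ∞) (lapC f) Ω := by
  unfold lapC
  exact ContDiffOn.sum (fun j _ => contDiffOn_pdc hΩ (contDiffOn_pdc hΩ hf))

lemma lapC_congr (hΩ : IsOpen Ω) (hfg : Set.EqOn f g Ω) (hx : x ∈ Ω) :
    lapC f x = lapC g x := by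
  unfold lapC
  refine Finset.sum_congr rfl (fun j _ => ?_)
  have : Set.EqOn (pdc f j) (pdc g j) Ω := fun y hy => pdc_congr hΩ hfg hy
  exact pdc_congr hΩ this hx

lemma lapC_zero : lapC (fun _ => (0:ℂ)) (N := N) x = 0 := by
  unfold lapC
  rw [Finset.sum_eq_zero]
  intro j _
  rw [pdc_zero_fun, pdc_zero]

lemma lapC_comb3 (hΩ : IsOpen Ω) (hf : ContDiffOn ℝ (⊤:ℕ∞) f Ω)
    (hg : ContDiffOn ℝ (⊤:ℕ∞) g Ω) (hh : ContDiffOn ℝ (⊤:ℕ∞) h Ω)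
    (hx : x ∈ Ω) (a b c : ℂ) :
    lapC (fun y => a * f y + b * g y + c * h y) x
      = a * lapC f x + b * lapC g x + c * lapC h x := by
  unfold lapC
  rw [Finset.mul_sum, Finset.mul_sum, Finset.mul_sum, ← Finset.sum_add_distrib,
    ← Finset.sum_add_distrib]
  refine Finset.sum_congr rfl (fun j _ => ?_)
  have e1 : Set.EqOn (pdc (fun y => a * f y + b * g y + c * h y) j)
      (fun y => a * pdc f j y + b * pdc g j y + c * pdc h j y) Ω :=
    fun y hy => pdc_comb3 hΩ hf hg hh hy a b c
  rw [pdc_congr hΩ e1 hx]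
  exact pdc_comb3 hΩ (contDiffOn_pdc hΩ hf) (contDiffOn_pdc hΩ hg) (contDiffOn_pdc hΩ hh) hx a b c

lemma lapC_comb2 (hΩ : IsOpen Ω) (hf : ContDiffOn ℝ (⊤:ℕ∞) f Ω)
    (hg : ContDiffOn ℝ (⊤:ℕ∞) g Ω) (hx : x ∈ Ω) (a b : ℂ) :
    lapC (fun y => a * f y + b * g y) x = a * lapC f x + b * lapC g x := by
  unfold lapC
  rw [Finset.mul_sum, Finset.mul_sum, ← Finset.sum_add_distrib]
  refine Finset.sum_congr rfl (fun j _ => ?_)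
  have e1 : Set.EqOn (pdc (fun y => a * f y + b * g y) j)
      (fun y => a * pdc f j y + b * pdc g j y) Ω :=
    fun y hy => pdc_comb2 hΩ hf hg hy a b
  rw [pdc_congr hΩ e1 hx]
  exact pdc_comb2 hΩ (contDiffOn_pdc hΩ hf) (contDiffOn_pdc hΩ hg) hx a b

lemma lapC_const_mul (hΩ : IsOpen Ω) (hf : ContDiffOn ℝ (⊤:ℕ∞) f Ω) (hx : x ∈ Ω) (a : ℂ) :
    lapC (fun y => a * f y) x = a * lapC f x := by
  unfold lapC
  rw [Finset.mul_sum]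
  refine Finset.sum_congr rfl (fun j _ => ?_)
  have e1 : Set.EqOn (pdc (fun y => a * f y) j) (fun y => a * pdc f j y) Ω :=
    fun y hy => pdc_const_mul hΩ hf hy a
  rw [pdc_congr hΩ e1 hx]
  exact pdc_const_mul hΩ (contDiffOn_pdc hΩ hf) hx a

lemma lapC_pdc_comm (hΩ : IsOpen Ω) (hf : ContDiffOn ℝ (⊤:ℕ∞) f Ω) (hx : x ∈ Ω) :
    lapC (pdc f i) x = pdc (lapC f) i x := by
  have step : ∀ j, pdc (pdc (pdc f i) j) j x = pdc (pdc (pdc f j) j) i x := by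
    intro j
    have e3 : Set.EqOn (pdc (pdc f i) j) (pdc (pdc f j) i) Ω :=
      fun y hy => pdc_swap hΩ hf hy
    calc pdc (pdc (pdc f i) j) j x = pdc (pdc (pdc f j) i) j x :=
          pdc_congr (j := j) hΩ e3 hx
      _ = pdc (pdc (pdc f j) j) i x := pdc_swap hΩ (contDiffOn_pdc hΩ hf) hx
  unfold lapC
  rw [Finset.sum_congr rfl (fun j _ => step j)]
  rw [← pdc_sum Finset.univ (fun j => pdc (pdc f j) j) hΩ
    (fun j _ => contDiffOn_pdc hΩ (contDiffOn_pdc hΩ hf)) hx]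

lemma lapC_sum {ι : Type*} (s : Finset ι) (F : ι → EuclideanSpace ℝ (Fin N) → ℂ)
    (hΩ : IsOpen Ω) (hF : ∀ i ∈ s, ContDiffOn ℝ (⊤:ℕ∞) (F i) Ω) (hx : x ∈ Ω) :
    lapC (fun y => ∑ i ∈ s, F i y) x = ∑ i ∈ s, lapC (F i) x := by
  unfold lapC
  rw [Finset.sum_comm]
  refine Finset.sum_congr rfl (fun j _ => ?_)
  have e1 : Set.EqOn (pdc (fun y => ∑ i ∈ s, F i y) j) (fun y => ∑ i ∈ s, pdc (F i) j y) Ω :=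
    fun y hy => pdc_sum s F hΩ hF hy
  rw [pdc_congr hΩ e1 hx]
  exact pdc_sum s (fun i => pdc (F i) j) hΩ (fun i hi => contDiffOn_pdc hΩ (hF i hi)) hx

end Aux


lemma alg1 (m l r o C A B : ℂ) (hm : m ≠ 0) (hl : l + 2*m ≠ 0) (hr : r ≠ 0) (ho : o ≠ 0)
    (hN : m * B + (l + m) * A + r * o ^ 2 * C = 0) :
    C = -A / (r * o ^ 2 / (l + 2 * m)) + (A - B) / (r * o ^ 2 / m) := by
  have h2 : r * o ^ 2 ≠ 0 := mul_ne_zero hr (pow_ne_zero 2 ho)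
  have hC : C = (-(m * B) - (l + m) * A) / (r * o ^ 2) := by
    field_simp
    linear_combination hN
  rw [hC]
  field_simp
  ring

lemma alg2 (w A : ℂ) (hw : w ≠ 0) : -w⁻¹ * (-w * A) + w * (-A / w) = 0 := by
  field_simp
  ring

lemma alg3 (m l r o A B LL : ℂ) (hm : m ≠ 0) (hl : l + 2*m ≠ 0) (hr : r ≠ 0) (ho : o ≠ 0)
    (h6 : m * LL + (l + m) * (-(r * o ^ 2 / (l + 2 * m)) * A) + r * o ^ 2 * B = 0) :
    (r * o ^ 2 / m)⁻¹ * (-(r * o ^ 2 / (l + 2 * m)) * A) + -(r * o ^ 2 / m)⁻¹ * LL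
      + r * o ^ 2 / m * ((A - B) / (r * o ^ 2 / m)) = 0 := by
  have h2 : r * o ^ 2 ≠ 0 := mul_ne_zero hr (pow_ne_zero 2 ho)
  have hLL : LL = ((l + m) * (r * o ^ 2) * A - (l + 2 * m) * (r * o ^ 2) * B) / (m * (l + 2 * m)) := by
    rw [eq_div_iff (mul_ne_zero hm hl)]
    linear_combination (l + 2 * m) * h6 + (l + m) * r * o ^ 2 * A * mul_inv_cancel₀ hl
  rw [hLL]
  field_simp
  linear_combination (B - A) * mul_inv_cancel₀ hl

/-- Helmholtz decomposition of Navier solutions: if `u` is a smooth solution of the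
Navier equation on an open `Ω ⊆ ℝ^N`, with longitudinal part `u_p = −∇(div u)/ω_p²`
and transversal part `u_s = (∇(div u) − Δu)/ω_s²`, then `u = u_p + u_s` on `Ω`,
`Δu_p + ω_p² u_p = 0` and `Δu_s + ω_s² u_s = 0` componentwise on `Ω`. -/
theorem helmholtz_decomposition (N : ℕ) (hN : 2 ≤ N)
    (mu lam rho om : ℝ) (hmu : 0 < mu) (hlam : 0 < lam + 2 * mu)
    (hrho : 0 < rho) (hom : 0 < om)
    (Ω : Set (EuclideanSpace ℝ (Fin N))) (hΩopen : IsOpen Ω)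
    (u : EuclideanSpace ℝ (Fin N) → Fin N → ℂ)
    (hu : ContDiffOn ℝ (⊤ : ℕ∞) u Ω)
    (hNavier : NavierOn mu lam rho om u Ω) :
    (∀ x ∈ Ω, ∀ i, u x i = uLong mu lam rho om u x i + uTrans mu rho om u x i) ∧
    (∀ x ∈ Ω, ∀ i, lapC (fun y => uLong mu lam rho om u y i) x
        + ((rho * om ^ 2 / (lam + 2 * mu) : ℝ) : ℂ) * uLong mu lam rho om u x i = 0) ∧
    (∀ x ∈ Ω, ∀ i, lapC (fun y => uTrans mu rho om u y i) x
        + ((rho * om ^ 2 / mu : ℝ) : ℂ) * uTrans mu rho om u x i = 0) := by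
  -- nonzero constants
  have hmu' : (mu : ℂ) ≠ 0 := Complex.ofReal_ne_zero.mpr hmu.ne'
  have hl2 : ((lam + 2 * mu : ℝ) : ℂ) ≠ 0 := Complex.ofReal_ne_zero.mpr hlam.ne'
  have hrw : ((rho * om ^ 2 : ℝ) : ℂ) ≠ 0 :=
    Complex.ofReal_ne_zero.mpr (by positivity)
  have hwp : ((rho * om ^ 2 / (lam + 2 * mu) : ℝ) : ℂ) ≠ 0 :=
    Complex.ofReal_ne_zero.mpr (by positivity)
  have hws : ((rho * om ^ 2 / mu : ℝ) : ℂ) ≠ 0 :=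
    Complex.ofReal_ne_zero.mpr (by positivity)
  have hrho' : (rho : ℂ) ≠ 0 := Complex.ofReal_ne_zero.mpr hrho.ne'
  have hom' : (om : ℂ) ≠ 0 := Complex.ofReal_ne_zero.mpr hom.ne'
  have hl2' : (lam : ℂ) + 2 * (mu : ℂ) ≠ 0 := by exact_mod_cast hl2
  -- smoothness
  have hui : ∀ i, ContDiffOn ℝ (⊤:ℕ∞) (fun y => u y i) Ω := contDiffOn_pi.mp hu
  have hdivC_eq : divC u = fun y => ∑ i, pdc (fun z => u z i) i y := rfl
  have hD : ContDiffOn ℝ (⊤:ℕ∞) (divC u) Ω := by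
    rw [hdivC_eq]
    exact ContDiffOn.sum (fun i _ => contDiffOn_pdc hΩopen (hui i))
  have hpD : ∀ i, ContDiffOn ℝ (⊤:ℕ∞) (pdc (divC u) i) Ω :=
    fun i => contDiffOn_pdc hΩopen hD
  have hLu : ∀ i, ContDiffOn ℝ (⊤:ℕ∞) (lapC (fun y => u y i)) Ω :=
    fun i => contDiffOn_lapC hΩopen (hui i)
  -- Navier equation as an EqOn statement
  have hNfun : ∀ i, Set.EqOn
      (fun y => (mu:ℂ) * lapC (fun z => u z i) y
        + ((lam + mu : ℝ):ℂ) * pdc (divC u) i y + ((rho * om ^ 2 : ℝ):ℂ) * u y i)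
      (fun _ => (0:ℂ)) Ω := fun i y hy => hNavier y hy i
  -- first derivative of the Navier equation
  have K2 : ∀ x ∈ Ω, ∀ i j, (mu:ℂ) * pdc (lapC (fun z => u z i)) j x
      + ((lam + mu : ℝ):ℂ) * pdc (pdc (divC u) i) j x
      + ((rho * om ^ 2 : ℝ):ℂ) * pdc (fun z => u z i) j x = 0 := by
    intro x hx i j
    have h0 := pdc_congr (j := j) hΩopen (hNfun i) hx
    rw [pdc_zero] at h0
    rw [pdc_comb3 hΩopen (hLu i) (hpD i) (hui i) hx] at h0
    exact h0
  -- divergence of the Navier equation: (λ+2μ) Δ(div u) + ρω² div u = 0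
  have K3 : ∀ x ∈ Ω, ((lam + 2 * mu : ℝ):ℂ) * lapC (divC u) x
      + ((rho * om ^ 2 : ℝ):ℂ) * divC u x = 0 := by
    intro x hx
    have hsum : ∑ i, ((mu:ℂ) * pdc (lapC (fun z => u z i)) i x
        + ((lam + mu : ℝ):ℂ) * pdc (pdc (divC u) i) i x
        + ((rho * om ^ 2 : ℝ):ℂ) * pdc (fun z => u z i) i x) = 0 :=
      Finset.sum_eq_zero (fun i _ => K2 x hx i i)
    rw [Finset.sum_add_distrib, Finset.sum_add_distrib, ← Finset.mul_sum,
      ← Finset.mul_sum, ← Finset.mul_sum] at hsum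
    have S1 : ∑ i, pdc (lapC (fun z => u z i)) i x = lapC (divC u) x := by
      have e : ∀ i : Fin N, pdc (lapC (fun z => u z i)) i x
          = lapC (pdc (fun z => u z i) i) x :=
        fun i => (lapC_pdc_comm hΩopen (hui i) hx).symm
      rw [Finset.sum_congr rfl (fun i _ => e i)]
      rw [← lapC_sum Finset.univ (fun i => pdc (fun z => u z i) i) hΩopen
        (fun i _ => contDiffOn_pdc hΩopen (hui i)) hx]
      rw [hdivC_eq]
    have S2 : ∑ i, pdc (pdc (divC u) i) i x = lapC (divC u) x := rfl
    have S3 : ∑ i, pdc (fun z => u z i) i x = divC u x := rfl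
    rw [S1, S2, S3] at hsum
    push_cast at hsum ⊢
    linear_combination hsum
  -- Δ(div u) = -ω_p² div u on Ω
  have hLD : Set.EqOn (lapC (divC u))
      (fun y => (-((rho * om ^ 2 / (lam + 2 * mu) : ℝ):ℂ)) * divC u y) Ω := by
    intro x hx
    have h3 := K3 x hx
    show lapC (divC u) x = _
    push_cast at h3 ⊢
    field_simp
    linear_combination h3
  -- Δ(∂_i div u) = -ω_p² ∂_i div u at points of Ω
  have K5 : ∀ x ∈ Ω, ∀ i, lapC (pdc (divC u) i) x
      = -((rho * om ^ 2 / (lam + 2 * mu) : ℝ):ℂ) * pdc (divC u) i x := by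
    intro x hx i
    rw [lapC_pdc_comm hΩopen hD hx]
    rw [pdc_congr (j := i) hΩopen hLD hx]
    exact pdc_const_mul hΩopen hD hx _
  -- Laplacian of the Navier equation
  have K6 : ∀ x ∈ Ω, ∀ i, (mu:ℂ) * lapC (lapC (fun z => u z i)) x
      + ((lam + mu : ℝ):ℂ) * lapC (pdc (divC u) i) x
      + ((rho * om ^ 2 : ℝ):ℂ) * lapC (fun z => u z i) x = 0 := by
    intro x hx i
    have h0 := lapC_congr hΩopen (hNfun i) hx
    rw [lapC_zero] at h0
    rw [lapC_comb3 hΩopen (hLu i) (hpD i) (hui i) hx] at h0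
    exact h0
  refine ⟨?_, ?_, ?_⟩
  · -- decomposition
    intro x hx i
    have hN := hNavier x hx i
    simp only [uLong, uTrans]
    push_cast at hN ⊢
    first
      | exact alg1 _ _ _ _ _ _ _ hmu' hl2' hrho' hom' hN
      | linear_combination alg1 ((mu:ℂ)) ((lam:ℂ)) ((rho:ℂ)) ((om:ℂ)) (u x i)
          (pdc (divC u) i x) (lapC (fun y => u y i) x) hmu' hl2' hrho' hom' hN
  · -- longitudinal Helmholtz
    intro x hx i
    have hfun : (fun y => uLong mu lam rho om u y i)
        = fun y => (-((rho * om ^ 2 / (lam + 2 * mu) : ℝ):ℂ)⁻¹) * pdc (divC u) i y := by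
      funext y; unfold uLong; ring
    rw [hfun]
    rw [lapC_const_mul hΩopen (hpD i) hx]
    rw [K5 x hx i]
    simp only [uLong]
    have hw : (rho:ℂ) * (om:ℂ) ^ 2 / ((lam:ℂ) + 2 * (mu:ℂ)) ≠ 0 :=
      div_ne_zero (mul_ne_zero hrho' (pow_ne_zero 2 hom')) hl2'
    push_cast
    first
      | exact alg2 _ _ hw
      | linear_combination alg2 ((rho:ℂ) * (om:ℂ) ^ 2 / ((lam:ℂ) + 2 * (mu:ℂ)))
          (pdc (divC u) i x) hw
  · -- transversal Helmholtz
    intro x hx i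
    have hfun : (fun y => uTrans mu rho om u y i)
        = fun y => ((rho * om ^ 2 / mu : ℝ):ℂ)⁻¹ * pdc (divC u) i y
          + (-((rho * om ^ 2 / mu : ℝ):ℂ)⁻¹) * lapC (fun z => u z i) y := by
      funext y; unfold uTrans; ring
    rw [hfun]
    rw [lapC_comb2 hΩopen (hpD i) (hLu i) hx]
    rw [K5 x hx i]
    have h6 := K6 x hx i
    rw [K5 x hx i] at h6
    simp only [uTrans]
    push_cast at h6 ⊢
    first
      | exact alg3 _ _ _ _ _ _ _ hmu' hl2' hrho' hom' h6
      | linear_combination alg3 ((mu:ℂ)) ((lam:ℂ)) ((rho:ℂ)) ((om:ℂ))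
          (pdc (divC u) i x) (lapC (fun z => u z i) x)
          (lapC (lapC (fun z => u z i)) x) hmu' hl2' hrho' hom' h6
end
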